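/- Let K₁₁, K₂₂, K₃₃ > 0 and K₁₂ ∈ ℝ with K₁₁K₂₂ > K₁₂², and define the block matrix ℂ = diag((K₁₁ K₁₂; K₁₂ K₂₂), K₃₃) in ℝ^{3×3} and 𝔻 as before. Then the eigenvalues of ℂ ± α𝔻 are K₃₃ ∓ α/4 and (K₁₁+K₂₂)/2 ± √(((K₁₁−K₂₂)/2)² + (K₁₂ ± α/2)²), and consequently α⁺ = min{4K₃₃, 2(√(K₁₁K₂₂) − K₁₂)} and α⁻ = 2(√(K₁₁K₂₂) + K₁₂). -/

import Mathlib

open Matrix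

noncomputable def Dmat : Matrix (Fin 3) (Fin 3) ℝ :=
  !![0, 1/2, 0; 1/2, 0, 0; 0, 0, -(1/4)]

private lemma eig_iff (a b c d t : ℝ) :
    (∃ v : Fin 3 → ℝ, v ≠ 0 ∧ (!![a,b,0;b,c,0;0,0,d] : Matrix (Fin 3) (Fin 3) ℝ).mulVec v = t • v) ↔
      t = d ∨ t = (a+c)/2 + Real.sqrt (((a-c)/2)^2 + b^2)
        ∨ t = (a+c)/2 - Real.sqrt (((a-c)/2)^2 + b^2) := by
  set s := Real.sqrt (((a-c)/2)^2 + b^2) with hs_def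
  have hs : s^2 = ((a-c)/2)^2 + b^2 := Real.sq_sqrt (by positivity)
  set M : Matrix (Fin 3) (Fin 3) ℝ := !![a,b,0;b,c,0;0,0,d] with hM
  have h1 : ∀ v : Fin 3 → ℝ, M.mulVec v = t • v ↔ (M - t • 1).mulVec v = 0 := by
    intro v
    rw [Matrix.sub_mulVec, Matrix.smul_mulVec, Matrix.one_mulVec, sub_eq_zero]
  have h2 : (∃ v : Fin 3 → ℝ, v ≠ 0 ∧ M.mulVec v = t • v) ↔ (M - t • 1).det = 0 := by
    rw [← Matrix.exists_mulVec_eq_zero_iff]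
    constructor
    · rintro ⟨v, hv, h⟩; exact ⟨v, hv, (h1 v).1 h⟩
    · rintro ⟨v, hv, h⟩; exact ⟨v, hv, (h1 v).2 h⟩
  rw [h2]
  have hE : M - t • 1 = !![a-t, b, 0; b, c-t, 0; 0, 0, d-t] := by
    ext i j
    fin_cases i <;> fin_cases j <;> simp [hM, Matrix.one_apply]
  have hdet : (M - t • 1).det = (d - t) * ((t - (a+c)/2) - s) * ((t - (a+c)/2) + s) := by
    rw [hE, Matrix.det_fin_three]
    simp
    linear_combination (d - t) * hs
  rw [hdet]
  constructor
  · intro h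
    rcases mul_eq_zero.1 h with h | h
    · rcases mul_eq_zero.1 h with h | h
      · left; linarith
      · right; left; linarith
    · right; right; linarith
  · rintro (h | h | h) <;> subst h <;> ring

private lemma psd_iff (a b c d : ℝ) (ha : 0 < a) (hc : 0 < c) :
    (!![a,b,0;b,c,0;0,0,d] : Matrix (Fin 3) (Fin 3) ℝ).PosSemidef ↔ b^2 ≤ a*c ∧ 0 ≤ d := by
  rw [Matrix.posSemidef_iff_dotProduct_mulVec]
  constructor
  · rintro ⟨_, hq⟩
    constructor
    · have h := hq ![c, -b, 0]
      simp [Matrix.mulVec, dotProduct, Fin.sum_univ_three] at h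
      nlinarith
    · have h := hq ![0, 0, 1]
      simp [Matrix.mulVec, dotProduct, Fin.sum_univ_three] at h
      linarith
  · rintro ⟨hb, hd⟩
    refine ⟨?_, ?_⟩
    · ext i j
      fin_cases i <;> fin_cases j <;> simp
    · intro x
      simp [Matrix.mulVec, dotProduct, Fin.sum_univ_three]
      nlinarith [sq_nonneg (a * x 0 + b * x 1), mul_nonneg hd (sq_nonneg (x 2)),
        mul_nonneg (sub_nonneg.2 hb) (sq_nonneg (x 1)), sq_nonneg (x 1), ha.le, hc.le]

theorem stmt_12 (K11 K22 K33 K12 : ℝ) (h11 : 0 < K11) (h22 : 0 < K22)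
    (h33 : 0 < K33) (hdet : K12 ^ 2 < K11 * K22)
    (C : Matrix (Fin 3) (Fin 3) ℝ)
    (hC : C = !![K11, K12, 0; K12, K22, 0; 0, 0, K33]) :
    (∀ α t : ℝ,
      ((∃ v : Fin 3 → ℝ, v ≠ 0 ∧ (C + α • Dmat).mulVec v = t • v) ↔
        t = K33 - α / 4 ∨
        t = (K11 + K22) / 2 + Real.sqrt (((K11 - K22) / 2) ^ 2 + (K12 + α / 2) ^ 2) ∨
        t = (K11 + K22) / 2 - Real.sqrt (((K11 - K22) / 2) ^ 2 + (K12 + α / 2) ^ 2))) ∧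
    (∀ α t : ℝ,
      ((∃ v : Fin 3 → ℝ, v ≠ 0 ∧ (C - α • Dmat).mulVec v = t • v) ↔
        t = K33 + α / 4 ∨
        t = (K11 + K22) / 2 + Real.sqrt (((K11 - K22) / 2) ^ 2 + (K12 - α / 2) ^ 2) ∨
        t = (K11 + K22) / 2 - Real.sqrt (((K11 - K22) / 2) ^ 2 + (K12 - α / 2) ^ 2))) ∧
    sSup {α : ℝ | 0 < α ∧ (C + α • Dmat).PosSemidef}
      = min (4 * K33) (2 * (Real.sqrt (K11 * K22) - K12)) ∧
    sSup {α : ℝ | 0 < α ∧ (C - α • Dmat).PosSemidef}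
      = 2 * (Real.sqrt (K11 * K22) + K12) := by
  subst hC
  have hK : (0:ℝ) ≤ K11 * K22 := by positivity
  set r := Real.sqrt (K11 * K22) with hr_def
  have hr2 : r ^ 2 = K11 * K22 := Real.sq_sqrt hK
  have hr0 : 0 ≤ r := Real.sqrt_nonneg _
  have hK1 : -r < K12 := by nlinarith
  have hK2 : K12 < r := by nlinarith
  have hMp : ∀ α : ℝ, (!![K11, K12, 0; K12, K22, 0; 0, 0, K33] : Matrix (Fin 3) (Fin 3) ℝ)
      + α • Dmat = !![K11, K12 + α/2, 0; K12 + α/2, K22, 0; 0, 0, K33 - α/4] := by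
    intro α
    ext i j
    fin_cases i <;> fin_cases j <;> simp [Dmat, Matrix.vecHead, Matrix.vecTail] <;> ring
  have hMm : ∀ α : ℝ, (!![K11, K12, 0; K12, K22, 0; 0, 0, K33] : Matrix (Fin 3) (Fin 3) ℝ)
      - α • Dmat = !![K11, K12 - α/2, 0; K12 - α/2, K22, 0; 0, 0, K33 + α/4] := by
    intro α
    ext i j
    fin_cases i <;> fin_cases j <;> simp [Dmat, Matrix.vecHead, Matrix.vecTail] <;> ring
  refine ⟨?_, ?_, ?_, ?_⟩
  · intro α t
    rw [hMp α]
    exact eig_iff K11 (K12 + α/2) K22 (K33 - α/4) t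
  · intro α t
    rw [hMm α]
    exact eig_iff K11 (K12 - α/2) K22 (K33 + α/4) t
  · have hmin : 0 < min (4 * K33) (2 * (r - K12)) :=
      lt_min (by linarith) (by linarith)
    have hset : {α : ℝ | 0 < α ∧
        ((!![K11, K12, 0; K12, K22, 0; 0, 0, K33] : Matrix (Fin 3) (Fin 3) ℝ) + α • Dmat).PosSemidef}
        = Set.Ioc 0 (min (4 * K33) (2 * (r - K12))) := by
      ext α
      simp only [Set.mem_setOf_eq, Set.mem_Ioc, le_min_iff]
      constructor
      · rintro ⟨hα, hpsd⟩
        rw [hMp α, psd_iff _ _ _ _ h11 h22] at hpsd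
        obtain ⟨h1, h2⟩ := hpsd
        refine ⟨hα, by linarith, ?_⟩
        nlinarith
      · rintro ⟨hα, h1, h2⟩
        refine ⟨hα, ?_⟩
        rw [hMp α, psd_iff _ _ _ _ h11 h22]
        constructor
        · nlinarith
        · linarith
    rw [hset, csSup_Ioc hmin]
  · have hpos : (0:ℝ) < 2 * (r + K12) := by linarith
    have hset : {α : ℝ | 0 < α ∧
        ((!![K11, K12, 0; K12, K22, 0; 0, 0, K33] : Matrix (Fin 3) (Fin 3) ℝ) - α • Dmat).PosSemidef}
        = Set.Ioc 0 (2 * (r + K12)) := by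
      ext α
      simp only [Set.mem_setOf_eq, Set.mem_Ioc]
      constructor
      · rintro ⟨hα, hpsd⟩
        rw [hMm α, psd_iff _ _ _ _ h11 h22] at hpsd
        obtain ⟨h1, h2⟩ := hpsd
        refine ⟨hα, ?_⟩
        nlinarith
      · rintro ⟨hα, h1⟩
        refine ⟨hα, ?_⟩
        rw [hMm α, psd_iff _ _ _ _ h11 h22]
        constructor
        · nlinarith
        · linarith
    rw [hset, csSup_Ioc hpos]
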